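/- Let (Y,τ) be a Hausdorff space possessing a locally strict Sorgenfrey base that has strict branches. Then (Y,τ) is homeomorphic to the space (ℕ → ℕ, σ_𝕊). -/

import Mathlib

open Set Filter Topology TopologicalSpace Function

noncomputable section

/-- The Sorgenfrey topology on `ℝ`: generated by half-open intervals `[a, b)`. -/
def sorgenfreyTop : TopologicalSpace ℝ :=
  TopologicalSpace.generateFrom {s : Set ℝ | ∃ a b : ℝ, s = Set.Ico a b}

/-- The initial segment `p↾n` of an infinite sequence, as a list. -/
def restr (p : ℕ → ℕ) (n : ℕ) : List ℕ := (List.range n).map p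

/-- `fruit V p = ⋂ n, V (p↾n)`. -/
def fruit {X : Type*} (V : List ℕ → Set X) (p : ℕ → ℕ) : Set X := ⋂ n, V (restr p n)

/-- A Souslin scheme is covering if `V ⟨⟩ = X` and `V a = ⋃ n, V (a ⌢ n)`. -/
def Covering {X : Type*} (V : List ℕ → Set X) : Prop :=
  V [] = Set.univ ∧ ∀ a : List ℕ, V a = ⋃ n : ℕ, V (a ++ [n])

/-- A Souslin scheme is complete if every fruit is nonempty. -/
def CompleteScheme {X : Type*} (V : List ℕ → Set X) : Prop :=
  ∀ q : ℕ → ℕ, (fruit V q).Nonempty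

/-- A Souslin scheme has strict branches if every fruit is a singleton. -/
def StrictBranches {X : Type*} (V : List ℕ → Set X) : Prop :=
  ∀ q : ℕ → ℕ, ∃ x : X, fruit V q = {x}

/-- A Souslin scheme is locally strict. -/
def LocallyStrict {X : Type*} (V : List ℕ → Set X) : Prop :=
  (∀ a : List ℕ, V a = ⋃ n : ℕ, V (a ++ [n])) ∧
  ∀ a : List ℕ, ∀ m k : ℕ, m ≠ k → V (a ++ [m]) ∩ V (a ++ [k]) = ∅

/-- `q ◁ p` for infinite sequences: `q↾n = p↾n` and `q n < p n` for some `n`. -/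
def tri (q p : ℕ → ℕ) : Prop := ∃ n : ℕ, restr q n = restr p n ∧ q n < p n

/-- `q ⊴ p` for infinite sequences. -/
def trieq (q p : ℕ → ℕ) : Prop := tri q p ∨ q = p

/-- `q ◁ s` where `q` is an infinite sequence and `s` a finite one. -/
def triL (q : ℕ → ℕ) (s : List ℕ) : Prop :=
  ∃ n : ℕ, ∃ h : n < s.length, restr q n = s.take n ∧ q n < s.get ⟨n, h⟩

/-- `rsequences(q, n) = {p | q ◁ p ∧ q↾n = p↾n}`. -/
def rsequences (q : ℕ → ℕ) (n : ℕ) : Set (ℕ → ℕ) :=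
  {p | tri q p ∧ restr q n = restr p n}

/-- `rsubtree(q, n)`: finite sequences `s` such that `q↾n ⊏ s` and `q ◁ s`. -/
def rsubtree (q : ℕ → ℕ) (n : ℕ) : Set (List ℕ) :=
  {s | restr q n <+: s ∧ restr q n ≠ s ∧ triL q s}

/-- `cut(V, q, n) = ⋃ {fruit(V, p) : p ∈ rsequences(q, n)}`. -/
def cut {X : Type*} (V : List ℕ → Set X) (q : ℕ → ℕ) (n : ℕ) : Set X :=
  ⋃ p ∈ rsequences q n, fruit V p

/-- `branches(V, x) = {q | x ∈ fruit(V, q)}`. -/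
def branches {X : Type*} (V : List ℕ → Set X) (x : X) : Set (ℕ → ℕ) :=
  {q | x ∈ fruit V q}

/-- `q` is a `τ`-base branch of `x` in `V`: `q ∈ branches(V, x)` and
`{cut(V, q, m) ∪ {x} : m ∈ ℕ}` is a neighborhood base of open sets at `x`. -/
def IsBaseBranch {X : Type*} (τ : TopologicalSpace X) (V : List ℕ → Set X)
    (q : ℕ → ℕ) (x : X) : Prop :=
  x ∈ fruit V q ∧ (∀ m : ℕ, IsOpen[τ] (cut V q m ∪ {x})) ∧
    (@nhds X τ x).HasBasis (fun _ : ℕ => True) (fun m : ℕ => cut V q m ∪ {x})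

/-- `BB(V, x, τ)`: the set of `τ`-base branches of `x` in `V`. -/
def BB {X : Type*} (τ : TopologicalSpace X) (V : List ℕ → Set X) (x : X) : Set (ℕ → ℕ) :=
  {q | IsBaseBranch τ V q x}

/-- A Sorgenfrey base for a space: an open complete covering Souslin scheme
satisfying (S1) and (S2). -/
def IsSorgenfreyBase {X : Type*} (τ : TopologicalSpace X) (V : List ℕ → Set X) : Prop :=
  (∀ a : List ℕ, IsOpen[τ] (V a)) ∧ CompleteScheme V ∧ Covering V ∧
  (∀ x : X, ∀ q ∈ branches V x, ∀ n : ℕ, ∃ t ∈ BB τ V x, restr t n = restr q n) ∧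
  (∀ q : ℕ → ℕ, ∃ z : X, q ∈ BB τ V z)

/-- The Souslin scheme `S` on the Baire set: `S a = {p | a ⊑ p}`. -/
def SchemeS (a : List ℕ) : Set (ℕ → ℕ) := {p | restr p a.length = a}

/-- The topology `σ_𝕊` on `ℕ → ℕ` generated by the base
`{cut(S, p, n) ∪ {p} : p ∈ ℕ → ℕ, n ∈ ℕ}`. -/
def sigmaS : TopologicalSpace (ℕ → ℕ) :=
  TopologicalSpace.generateFrom
    {U : Set (ℕ → ℕ) | ∃ p : ℕ → ℕ, ∃ n : ℕ, U = cut SchemeS p n ∪ {p}}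

lemma restr_succ' (p : ℕ → ℕ) (n : ℕ) : restr p (n + 1) = restr p n ++ [p n] := by
  simp [restr, List.range_succ]

lemma length_restr' (p : ℕ → ℕ) (n : ℕ) : (restr p n).length = n := by
  simp [restr]

lemma restr_eq_iff' {p q : ℕ → ℕ} {n : ℕ} :
    restr p n = restr q n ↔ ∀ k < n, p k = q k := by
  induction n with
  | zero => simp [restr]
  | succ n ih =>
    rw [restr_succ', restr_succ']
    constructor
    · intro h k hk
      have h1 := List.append_inj h (by rw [length_restr', length_restr'])
      rcases Nat.lt_succ_iff_lt_or_eq.mp hk with hk | hk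
      · exact ih.mp h1.1 k hk
      · subst hk; simpa using h1.2
    · intro h
      rw [ih.mpr fun k hk => h k (hk.trans (Nat.lt_succ_self n)),
        h n (Nat.lt_succ_self n)]

lemma restr_eq_of_le' {p q : ℕ → ℕ} {n m : ℕ} (h : restr p m = restr q m) (hnm : n ≤ m) :
    restr p n = restr q n :=
  restr_eq_iff'.mpr fun k hk => restr_eq_iff'.mp h k (hk.trans_le hnm)

lemma fruit_schemeS' (q : ℕ → ℕ) : fruit SchemeS q = {q} := by
  ext p
  simp only [fruit, mem_iInter, SchemeS, mem_setOf_eq, length_restr', mem_singleton_iff]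
  constructor
  · intro h
    funext k
    exact restr_eq_iff'.mp (h (k + 1)) k (Nat.lt_succ_self k)
  · rintro rfl n; rfl

lemma cut_schemeS' (q : ℕ → ℕ) (n : ℕ) : cut SchemeS q n = rsequences q n := by
  ext p
  simp [cut, fruit_schemeS', eq_comm]

lemma rsequences_antitone' {q : ℕ → ℕ} {n m : ℕ} (h : n ≤ m) :
    rsequences q m ⊆ rsequences q n := by
  rintro p ⟨h1, h2⟩
  exact ⟨h1, restr_eq_of_le' h2 h⟩

lemma rsequences_step' {p q : ℕ → ℕ} {n : ℕ} (hq : q ∈ rsequences p n) :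
    ∃ m, n ≤ m ∧ rsequences q m ⊆ rsequences p n := by
  obtain ⟨⟨k, hk1, hk2⟩, hn⟩ := hq
  refine ⟨max (k + 1) n, le_max_right _ _, ?_⟩
  rintro r ⟨-, hr⟩
  have hqr : ∀ j < max (k + 1) n, q j = r j := restr_eq_iff'.mp hr
  have hqk : restr q k = restr r k :=
    restr_eq_iff'.mpr fun j hj => hqr j (lt_of_lt_of_le (hj.trans (Nat.lt_succ_self k)) (le_max_left _ _))
  refine ⟨⟨k, hk1.trans hqk, ?_⟩, ?_⟩
  · rw [← hqr k (lt_of_lt_of_le (Nat.lt_succ_self k) (le_max_left _ _))]; exact hk2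
  · exact hn.trans (restr_eq_of_le' hr (le_max_right _ _))

lemma sigmaS_hasBasis' (q : ℕ → ℕ) :
    (@nhds _ sigmaS q).HasBasis (fun _ : ℕ => True)
      (fun m : ℕ => cut SchemeS q m ∪ {q}) := by
  have hb : @nhds _ sigmaS q = ⨅ m : ℕ, 𝓟 (cut SchemeS q m ∪ {q}) := by
    rw [sigmaS, nhds_generateFrom]
    apply le_antisymm
    · refine le_iInf fun m => ?_
      exact iInf₂_le (cut SchemeS q m ∪ {q}) ⟨by simp, q, m, rfl⟩
    · refine le_iInf₂ fun s hs => ?_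
      obtain ⟨hqs, p, n, rfl⟩ := hs
      rcases hqs with hqs | hqs
      · rw [cut_schemeS'] at hqs
        obtain ⟨m, -, hm⟩ := rsequences_step' hqs
        refine (iInf_le _ m).trans (principal_mono.mpr ?_)
        rw [cut_schemeS', cut_schemeS']
        exact union_subset (hm.trans subset_union_left)
          (singleton_subset_iff.mpr (Or.inl hqs))
      · simp only [mem_singleton_iff] at hqs; subst hqs
        exact iInf_le _ n
  rw [hb]
  refine hasBasis_iInf_principal ?_
  intro i j
  refine ⟨max i j, ?_, ?_⟩ <;>
    simp only [ge_iff_le, le_eq_subset, cut_schemeS']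
  · exact union_subset_union_left _ (rsequences_antitone' (le_max_left i j))
  · exact union_subset_union_left _ (rsequences_antitone' (le_max_right i j))

/-- A Hausdorff space with a locally strict Sorgenfrey base with strict branches
is homeomorphic to `(ℕ → ℕ, σ_𝕊)`. -/
theorem stmt5 {Y : Type*} (τ : TopologicalSpace Y) (hT2 : @T2Space Y τ)
    (V : List ℕ → Set Y) (hV : IsSorgenfreyBase τ V)
    (hls : LocallyStrict V) (hsb : StrictBranches V) :
    Nonempty (@Homeomorph Y (ℕ → ℕ) τ sigmaS) := by
  classical
  letI : TopologicalSpace Y := τ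
  letI : TopologicalSpace (ℕ → ℕ) := sigmaS
  choose f hf using hsb
  have hmemf : ∀ q, f q ∈ fruit V q := fun q => by rw [hf q]; rfl
  obtain ⟨hopen, hcomp, hcov, hS1, hS2⟩ := hV
  -- every q is a base branch of f q
  have hBB : ∀ q, IsBaseBranch τ V q (f q) := by
    intro q
    obtain ⟨z, hz⟩ := hS2 q
    have hz1 : z ∈ fruit V q := hz.1
    rw [hf q, mem_singleton_iff] at hz1
    rwa [← hz1]
  -- injectivity
  have hinj : Function.Injective f := by
    intro q q' h
    have h1 : f q ∈ fruit V q := hmemf q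
    have h2 : f q ∈ fruit V q' := h ▸ hmemf q'
    have key : ∀ n, restr q n = restr q' n := by
      intro n
      induction n with
      | zero => rfl
      | succ n ih =>
        rw [restr_succ', restr_succ', ih]
        have e1 : f q ∈ V (restr q' n ++ [q n]) := by
          rw [← ih, ← restr_succ']; exact mem_iInter.mp h1 (n + 1)
        have e2 : f q ∈ V (restr q' n ++ [q' n]) := by
          rw [← restr_succ']; exact mem_iInter.mp h2 (n + 1)
        by_contra hne
        have hne' : q n ≠ q' n := by
          intro hc; exact hne (by rw [hc])
        have := hls.2 (restr q' n) (q n) (q' n) hne'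
        exact absurd (mem_inter e1 e2) (by rw [this]; exact notMem_empty _)
    funext k
    exact restr_eq_iff'.mp (key (k + 1)) k (Nat.lt_succ_self k)
  -- surjectivity
  have hsurj : Function.Surjective f := by
    intro x
    have hx0 : x ∈ V [] := by rw [hcov.1]; trivial
    have hstep : ∀ a : List ℕ, ∃ c : ℕ, x ∈ V a → x ∈ V (a ++ [c]) := by
      intro a
      by_cases ha : x ∈ V a
      · have := hcov.2 a ▸ ha
        obtain ⟨c, hc⟩ := mem_iUnion.mp this
        exact ⟨c, fun _ => hc⟩
      · exact ⟨0, fun h => absurd h ha⟩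
    choose c hc using hstep
    let l : ℕ → List ℕ := fun n => (fun a => a ++ [c a])^[n] []
    let q : ℕ → ℕ := fun n => c (l n)
    have hl : ∀ n, l (n + 1) = l n ++ [q n] := fun n =>
      Function.iterate_succ_apply' (fun a => a ++ [c a]) n []
    have hxl : ∀ n, x ∈ V (l n) := by
      intro n
      induction n with
      | zero => exact hx0
      | succ n ih => rw [hl n]; exact hc (l n) ih
    have hrl : ∀ n, restr q n = l n := by
      intro n
      induction n with
      | zero => rfl
      | succ n ih => rw [restr_succ', ih, hl n]
    have hxq : x ∈ fruit V q := mem_iInter.mpr fun n => (hrl n) ▸ hxl n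
    rw [hf q, mem_singleton_iff] at hxq
    exact ⟨q, hxq.symm⟩
  -- image of basic sets
  have himg : ∀ q m, f '' (cut SchemeS q m ∪ {q}) = cut V q m ∪ {f q} := by
    intro q m
    rw [image_union, image_singleton, cut_schemeS']
    congr 1
    ext x
    simp only [mem_image, cut, mem_iUnion, exists_prop]
    constructor
    · rintro ⟨p, hp, rfl⟩; exact ⟨p, hp, hmemf p⟩
    · rintro ⟨p, hp, hx⟩
      rw [hf p, mem_singleton_iff] at hx
      exact ⟨p, hp, hx.symm⟩
  -- continuity
  have hcont : Continuous f := by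
    refine continuous_iff_continuousAt.mpr fun q => ?_
    refine ((sigmaS_hasBasis' q).tendsto_iff (hBB q).2.2).mpr fun m _ => ?_
    refine ⟨m, trivial, fun r hr => ?_⟩
    rw [← himg q m]
    exact mem_image_of_mem f hr
  -- open map
  have hopenmap : IsOpenMap f := by
    intro U hU
    rw [isOpen_iff_mem_nhds]
    rintro x ⟨q, hq, rfl⟩
    obtain ⟨m, -, hm⟩ := (sigmaS_hasBasis' q).mem_iff.mp (hU.mem_nhds hq)
    refine Filter.mem_of_superset ((hBB q).2.2.mem_of_mem (i := m) trivial) ?_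
    rw [← himg q m]
    exact image_mono hm
  exact ⟨(Equiv.toHomeomorphOfContinuousOpen
    (Equiv.ofBijective f ⟨hinj, hsurj⟩) hcont hopenmap).symm⟩
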